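/- Let p be an odd prime. For each n ≥ 1 set N_n = p^n − 1 and U_n(z) = P_{N_n}(z)·Q_{N_n}(z) ∈ ℚ[z], and let F(z) = ∑_{k=0}^∞ (binomial(2k, k)/4^k)² z^k = ₂F₁(1/2, 1/2; 1; z), a series which converges in ℚ_p whenever |z|_p < 1. Then for every z ∈ ℚ_p with |z|_p < 1 and every n ≥ 1, |U_n(z) − F(z)²|_p ≤ p^{−n}; in particular, U_n(z) converges p-adically to F(z)² as n → ∞. -/

import Mathlib

open Polynomial Finset

noncomputable section

/-- The rising Pochhammer symbol `(q)_k = q(q+1)⋯(q+k-1)` over `ℚ`. -/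
def poch (q : ℚ) (k : ℕ) : ℚ := (ascPochhammer ℚ k).eval q

/-- Coefficient of `z^k` in `P_N(z) = ₂F₁(-N/2, N/2+1; -N; z)`. -/
def Pcoef (N k : ℕ) : ℚ :=
  poch (-(N : ℚ) / 2) k * poch ((N : ℚ) / 2 + 1) k /
    (poch (-(N : ℚ)) k * (Nat.factorial k : ℚ))

/-- Coefficient of `z^k` in `Q_N(z) = ₂F₁(-N/2, -3N/2-1; -N; z)`. -/
def Qcoef (N k : ℕ) : ℚ :=
  poch (-(N : ℚ) / 2) k * poch (-(3 * (N : ℚ)) / 2 - 1) k /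
    (poch (-(N : ℚ)) k * (Nat.factorial k : ℚ))

/-- The polynomial `P_N(z)`. -/
def Ppoly (N : ℕ) : ℚ[X] := ∑ k ∈ Finset.range (N / 2 + 1), C (Pcoef N k) * X ^ k

/-- The polynomial `Q_N(z)`. -/
def Qpoly (N : ℕ) : ℚ[X] := ∑ k ∈ Finset.range (N / 2 + 1), C (Qcoef N k) * X ^ k

/-- The `p`-adic hypergeometric series `F(z) = ₂F₁(1/2, 1/2; 1; z)
= ∑ (binom(2k,k)/4^k)² z^k`, for `z` in the open `p`-adic unit disk. -/
def Fpadic (p : ℕ) [Fact p.Prime] (z : ℚ_[p]) : ℚ_[p] :=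
  ∑' k : ℕ, (((2 * k).choose k : ℚ_[p]) / 4 ^ k) ^ 2 * z ^ k

/-! ### Auxiliary lemmas -/

lemma poch_eq_prod (q : ℚ) (k : ℕ) : poch q k = ∏ i ∈ Finset.range k, (q + i) := by
  induction k with
  | zero => simp [poch]
  | succ k ih =>
    rw [poch, ascPochhammer_succ_eval, ← poch, ih, Finset.prod_range_succ]

lemma poch_half (k : ℕ) : poch (1/2) k = (2*k).factorial / (4^k * k.factorial) := by
  induction k with
  | zero => simp [poch]
  | succ k ih =>
    rw [poch, ascPochhammer_succ_eval, ← poch, ih]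
    have e1 : ((2*(k+1)).factorial : ℚ) = (2*k+2)*((2*k+1)*(2*k).factorial) := by
      rw [show 2*(k+1) = (2*k+1)+1 by ring, Nat.factorial_succ, Nat.factorial_succ]
      push_cast; ring
    have e2 : ((k+1).factorial : ℚ) = (k+1)*k.factorial := by
      rw [Nat.factorial_succ]; push_cast; ring
    rw [e1, e2]
    have h4 : (4:ℚ)^k ≠ 0 := by positivity
    have hf2 : ((k).factorial : ℚ) ≠ 0 := by exact_mod_cast (k).factorial_ne_zero
    field_simp
    ring

lemma poch_one (k : ℕ) : poch 1 k = k.factorial := by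
  rw [poch_eq_prod]
  induction k with
  | zero => simp
  | succ k ih => rw [Finset.prod_range_succ, ih, Nat.factorial_succ]; push_cast; ring

/-- `binom(2k,k)/4^k` as a rational number. -/
def bq (k : ℕ) : ℚ := ((2*k).choose k : ℚ) / 4^k

lemma bq_eq (k : ℕ) : bq k = poch (1/2) k / k.factorial := by
  rw [bq, poch_half, Nat.cast_choose ℚ (by omega : k ≤ 2*k)]
  rw [show 2*k - k = k by omega]
  have h4 : (4:ℚ)^k ≠ 0 := by positivity
  have hf2 : ((k).factorial : ℚ) ≠ 0 := by exact_mod_cast (k).factorial_ne_zero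
  have hf : ((2*k).factorial : ℚ) ≠ 0 := by exact_mod_cast (2*k).factorial_ne_zero
  field_simp

variable {p : ℕ} [Fact p.Prime]

lemma aux_norm_nat_le_one (m : ℕ) : ‖(m : ℚ_[p])‖ ≤ 1 := by
  have := Padic.norm_int_le_one (p := p) (m : ℤ)
  simpa using this

lemma aux_norm_nat_eq (m : ℕ) (hm : m ≠ 0) :
    ‖(m : ℚ_[p])‖ = ((p : ℝ) ^ (padicValNat p m : ℤ))⁻¹ := by
  have h0 : (m : ℚ_[p]) ≠ 0 := Nat.cast_ne_zero.mpr hm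
  rw [Padic.norm_eq_zpow_neg_valuation h0, Padic.valuation_natCast, zpow_neg]

lemma aux_norm_nat_inv_le (m : ℕ) (hm : m ≠ 0) : ‖(m : ℚ_[p])‖⁻¹ ≤ (m : ℝ) := by
  rw [aux_norm_nat_eq m hm, inv_inv]
  have hd : p ^ (padicValNat p m) ∣ m := pow_padicValNat_dvd
  have h := Nat.le_of_dvd (Nat.pos_of_ne_zero hm) hd
  calc ((p:ℝ)) ^ (padicValNat p m : ℤ) = ((p ^ padicValNat p m : ℕ) : ℝ) := by
        rw [zpow_natCast]; push_cast; ring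
  _ ≤ (m : ℝ) := by exact_mod_cast h

lemma aux_div_nat (x : ℚ_[p]) (m : ℕ) (hm : m ≠ 0) : ‖x / m‖ ≤ ‖x‖ * m := by
  rw [norm_div]
  calc ‖x‖ / ‖(m:ℚ_[p])‖ = ‖x‖ * ‖(m:ℚ_[p])‖⁻¹ := div_eq_mul_inv _ _
  _ ≤ ‖x‖ * m := mul_le_mul_of_nonneg_left (aux_norm_nat_inv_le m hm) (norm_nonneg x)

lemma aux_norm_nat_one (m : ℕ) (hm : ¬ p ∣ m) : ‖(m : ℚ_[p])‖ = 1 := by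
  have hm0 : m ≠ 0 := by rintro rfl; exact hm (dvd_zero p)
  rw [aux_norm_nat_eq m hm0, padicValNat.eq_zero_of_not_dvd hm]
  simp

lemma aux_norm_two (hodd : p ≠ 2) : ‖(2 : ℚ_[p])‖ = 1 := by
  have h := aux_norm_nat_one (p := p) 2 (by
    intro h
    rcases Nat.prime_two.eq_one_or_self_of_dvd p h with h2 | h2
    · exact (Fact.out : p.Prime).ne_one h2
    · exact hodd h2)
  simpa using h

lemma aux_norm_ppow_le (m n : ℕ) (hm : m ≠ 0) (hlt : m < p ^ n) :
    ¬ ‖(m : ℚ_[p])‖ ≤ (p : ℝ) ^ (-n : ℤ) := by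
  intro h
  have hdvd : ((p : ℤ) ^ n) ∣ (m : ℤ) := by
    rw [← Padic.norm_int_le_pow_iff_dvd]
    simpa using h
  have h1 : (p : ℤ) ^ n ≤ (m : ℤ) := Int.le_of_dvd (by exact_mod_cast Nat.pos_of_ne_zero hm) hdvd
  have : p ^ n ≤ m := by exact_mod_cast h1
  omega

lemma aux_norm_sub_ppow (m n : ℕ) (hm : m ≠ 0) (hlt : m < p ^ n) :
    ‖(m : ℚ_[p]) - (p : ℚ_[p]) ^ n‖ = ‖(m : ℚ_[p])‖ := by
  have hp : ‖((p : ℚ_[p]) ^ n)‖ = (p : ℝ) ^ (-n : ℤ) := Padic.norm_p_pow n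
  have hkey := aux_norm_ppow_le m n hm hlt
  have hne : ‖(m : ℚ_[p])‖ ≠ ‖-((p : ℚ_[p]) ^ n)‖ := by
    rw [norm_neg, hp]
    intro h
    exact hkey h.le
  rw [sub_eq_add_neg, Padic.add_eq_max_of_ne hne, norm_neg, hp]
  exact max_eq_left (not_le.mp hkey).le

lemma aux_norm_le_one_of_sub {r : ℚ_[p]} {ε : ℝ} (hε : ε ≤ 1) (h : ‖r - 1‖ ≤ ε) : ‖r‖ ≤ 1 := by
  calc ‖r‖ = ‖(r - 1) + 1‖ := by ring_nf
  _ ≤ max ‖r - 1‖ ‖(1:ℚ_[p])‖ := Padic.nonarchimedean _ _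
  _ ≤ 1 := max_le (h.trans hε) (by simp)

lemma aux_prod_sub_one {r : ℕ → ℚ_[p]} {k : ℕ} {ε : ℝ} (hε0 : 0 ≤ ε) (hε1 : ε ≤ 1)
    (h : ∀ i < k, ‖r i - 1‖ ≤ ε) : ‖∏ i ∈ Finset.range k, r i - 1‖ ≤ ε := by
  induction k with
  | zero => simpa
  | succ k ih =>
    have hk : ∀ i < k, ‖r i - 1‖ ≤ ε := fun i hi => h i (hi.trans (Nat.lt_succ_self k))
    have ihk := ih hk
    have h1 : ‖∏ i ∈ Finset.range k, r i‖ ≤ 1 := aux_norm_le_one_of_sub hε1 ihk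
    rw [Finset.prod_range_succ]
    have e : (∏ i ∈ Finset.range k, r i) * r k - 1
        = (∏ i ∈ Finset.range k, r i) * (r k - 1) + ((∏ i ∈ Finset.range k, r i) - 1) := by ring
    rw [e]
    refine le_trans (Padic.nonarchimedean _ _) (max_le ?_ ihk)
    rw [norm_mul]
    calc ‖∏ i ∈ Finset.range k, r i‖ * ‖r k - 1‖ ≤ 1 * ε :=
      mul_le_mul h1 (h k (Nat.lt_succ_self k)) (norm_nonneg _) zero_le_one
    _ = ε := one_mul ε

lemma aux_three {a b c : ℚ_[p]} {ε : ℝ} (hε1 : ε ≤ 1) (ha : ‖a - 1‖ ≤ ε) (hb : ‖b - 1‖ ≤ ε)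
    (hc : ‖c - 1‖ ≤ ε) : ‖a * b * c - 1‖ ≤ ε := by
  have hb1 : ‖b‖ ≤ 1 := aux_norm_le_one_of_sub hε1 hb
  have hc1 : ‖c‖ ≤ 1 := aux_norm_le_one_of_sub hε1 hc
  have e : a * b * c - 1 = (a - 1) * (b * c) + ((b - 1) * c + (c - 1)) := by ring
  have hε0 : 0 ≤ ε := le_trans (norm_nonneg _) hc
  rw [e]
  refine le_trans (Padic.nonarchimedean _ _) (max_le ?_ ?_)
  · rw [norm_mul, norm_mul]
    calc ‖a - 1‖ * (‖b‖ * ‖c‖) ≤ ε * (1 * 1) :=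
      mul_le_mul ha (mul_le_mul hb1 hc1 (norm_nonneg _) zero_le_one) (by positivity) hε0
    _ = ε := by ring
  · refine le_trans (Padic.nonarchimedean _ _) (max_le ?_ hc)
    rw [norm_mul]
    calc ‖b - 1‖ * ‖c‖ ≤ ε * 1 := mul_le_mul hb hc1 (norm_nonneg _) hε0
    _ = ε := mul_one ε

lemma coef_eq (M k : ℕ) (hk : k ≤ M) (s : ℚ) :
    poch (-((2*M : ℕ) : ℚ)/2) k * poch s k / (poch (-((2*M:ℕ):ℚ)) k * k.factorial)
    = bq k ^ 2 * ∏ i ∈ Finset.range k,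
        ((((i:ℚ) - M) / ((i:ℚ) + 1/2)) * ((s + i) / ((i:ℚ) + 1/2)) *
          (((i:ℚ) + 1) / ((i:ℚ) - 2*M))) := by
  have e1 : poch (-((2*M:ℕ):ℚ)/2) k = ∏ i ∈ Finset.range k, ((i:ℚ) - M) := by
    rw [poch_eq_prod]
    refine Finset.prod_congr rfl fun i _ => by push_cast; ring
  have e3 : poch (-((2*M:ℕ):ℚ)) k = ∏ i ∈ Finset.range k, ((i:ℚ) - 2*M) := by
    rw [poch_eq_prod]
    refine Finset.prod_congr rfl fun i _ => by push_cast; ring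
  have e2 : poch s k = ∏ i ∈ Finset.range k, (s + i) := poch_eq_prod s k
  have ef : (k.factorial : ℚ) = ∏ i ∈ Finset.range k, ((i:ℚ) + 1) := by
    rw [← poch_one, poch_eq_prod]
    exact Finset.prod_congr rfl fun i _ => by ring
  have eh : poch (1/2) k = ∏ i ∈ Finset.range k, ((i:ℚ) + 1/2) := by
    rw [poch_eq_prod]
    exact Finset.prod_congr rfl fun i _ => by ring
  have hH : (∏ i ∈ Finset.range k, ((i:ℚ) + 1/2)) ≠ 0 := by
    rw [Finset.prod_ne_zero_iff]
    intro i _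
    have : (0:ℚ) < (i:ℚ) + 1/2 := by positivity
    exact this.ne'
  have hC : (∏ i ∈ Finset.range k, ((i:ℚ) - 2*M)) ≠ 0 := by
    rw [Finset.prod_ne_zero_iff]
    intro i hi
    rw [Finset.mem_range] at hi
    have hi2 : (i:ℚ) < 2*(M:ℚ) := by
      have : i < 2*M := by omega
      exact_mod_cast this
    intro h
    have : (i:ℚ) = 2*M := by linarith
    linarith
  have hF : (∏ i ∈ Finset.range k, ((i:ℚ) + 1)) ≠ 0 := by
    rw [Finset.prod_ne_zero_iff]
    intro i _
    positivity
  rw [bq_eq, eh, e1, e2, e3, ef]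
  rw [Finset.prod_mul_distrib, Finset.prod_mul_distrib, Finset.prod_div_distrib,
    Finset.prod_div_distrib, Finset.prod_div_distrib]
  field_simp

lemma aux_norm_bq_le_one (hodd : p ≠ 2) (k : ℕ) : ‖((bq k : ℚ) : ℚ_[p])‖ ≤ 1 := by
  rw [bq]
  push_cast
  rw [norm_div, norm_pow]
  have h4 : ‖(4 : ℚ_[p])‖ = 1 := by
    have : ((4:ℚ_[p])) = 2 * 2 := by norm_num
    rw [this, norm_mul, aux_norm_two hodd, one_mul]
  rw [h4, one_pow, div_one]
  exact aux_norm_nat_le_one _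

lemma aux_den_eq (i : ℕ) : ((i:ℚ_[p]) + 1/2) = ((2*i+1 : ℕ) : ℚ_[p]) / 2 := by
  push_cast
  ring

lemma aux_den_ne (hodd : p ≠ 2) (i : ℕ) : ((i:ℚ_[p]) + 1/2) ≠ 0 := by
  rw [aux_den_eq]
  apply div_ne_zero
  · exact Nat.cast_ne_zero.mpr (by omega : 2*i+1 ≠ 0)
  · norm_num

lemma aux_norm_div_den (hodd : p ≠ 2) (x : ℚ_[p]) (i : ℕ) :
    ‖x / ((i:ℚ_[p]) + 1/2)‖ ≤ ‖x‖ * (2*(i:ℝ)+1) := by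
  rw [aux_den_eq, div_div_eq_mul_div, norm_div, norm_mul, aux_norm_two hodd, mul_one]
  have := aux_div_nat x (2*i+1) (by omega)
  rw [norm_div] at this
  calc ‖x‖ / ‖((2*i+1 : ℕ) : ℚ_[p])‖ ≤ ‖x‖ * (2*i+1 : ℕ) := this
  _ = ‖x‖ * (2*(i:ℝ)+1) := by push_cast; ring

lemma aux_r1 (hodd : p ≠ 2) {n M : ℕ} (h2M : 2*M+1 = p^n) (i : ℕ) :
    ‖(((i:ℚ) - M : ℚ) : ℚ_[p]) / ((i:ℚ_[p]) + 1/2) - 1‖ ≤ (p:ℝ)^(-n:ℤ) * (2*(i:ℝ)+1) := by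
  have hden := aux_den_ne (p := p) hodd i
  have hpn : ((p:ℚ_[p]))^n = 2*(M:ℚ_[p])+1 := by
    have h' : ((p:ℚ_[p]))^n = ((p^n : ℕ) : ℚ_[p]) := by push_cast; ring
    rw [h', ← h2M]; push_cast; ring
  have e : (((i:ℚ) - M : ℚ) : ℚ_[p]) / ((i:ℚ_[p]) + 1/2) - 1
      = (-((p:ℚ_[p])^n)) / 2 / ((i:ℚ_[p]) + 1/2) := by
    rw [show (((i:ℚ) - M : ℚ) : ℚ_[p]) = (i:ℚ_[p]) - M from by push_cast; ring,
      div_sub_one hden]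
    congr 1
    rw [hpn]
    ring
  rw [e]
  calc ‖-((p:ℚ_[p])^n) / 2 / ((i:ℚ_[p]) + 1/2)‖
      ≤ ‖-((p:ℚ_[p])^n) / 2‖ * (2*(i:ℝ)+1) := aux_norm_div_den hodd _ i
  _ = (p:ℝ)^(-n:ℤ) * (2*(i:ℝ)+1) := by
      rw [norm_div, norm_neg, aux_norm_two hodd, div_one, Padic.norm_p_pow]

lemma aux_r2P (hodd : p ≠ 2) {n M : ℕ} (h2M : 2*M+1 = p^n) (i : ℕ) :
    ‖((((2*M:ℕ):ℚ)/2 + 1 + i : ℚ) : ℚ_[p]) / ((i:ℚ_[p]) + 1/2) - 1‖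
      ≤ (p:ℝ)^(-n:ℤ) * (2*(i:ℝ)+1) := by
  have hden := aux_den_ne (p := p) hodd i
  have hpn : ((p:ℚ_[p]))^n = 2*(M:ℚ_[p])+1 := by
    have h' : ((p:ℚ_[p]))^n = ((p^n : ℕ) : ℚ_[p]) := by push_cast; ring
    rw [h', ← h2M]; push_cast; ring
  have e : ((((2*M:ℕ):ℚ)/2 + 1 + i : ℚ) : ℚ_[p]) / ((i:ℚ_[p]) + 1/2) - 1
      = ((p:ℚ_[p])^n) / 2 / ((i:ℚ_[p]) + 1/2) := by
    rw [show ((((2*M:ℕ):ℚ)/2 + 1 + i : ℚ) : ℚ_[p]) = (M:ℚ_[p]) + 1 + i from by push_cast; ring,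
      div_sub_one hden]
    congr 1
    rw [hpn]
    ring
  rw [e]
  calc ‖(p:ℚ_[p])^n / 2 / ((i:ℚ_[p]) + 1/2)‖
      ≤ ‖(p:ℚ_[p])^n / 2‖ * (2*(i:ℝ)+1) := aux_norm_div_den hodd _ i
  _ = (p:ℝ)^(-n:ℤ) * (2*(i:ℝ)+1) := by
      rw [norm_div, aux_norm_two hodd, div_one, Padic.norm_p_pow]

lemma aux_r2Q (hodd : p ≠ 2) {n M : ℕ} (h2M : 2*M+1 = p^n) (i : ℕ) :
    ‖((-(3*((2*M:ℕ):ℚ))/2 - 1 + i : ℚ) : ℚ_[p]) / ((i:ℚ_[p]) + 1/2) - 1‖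
      ≤ (p:ℝ)^(-n:ℤ) * (2*(i:ℝ)+1) := by
  have hden := aux_den_ne (p := p) hodd i
  have hpn : ((p:ℚ_[p]))^n = 2*(M:ℚ_[p])+1 := by
    have h' : ((p:ℚ_[p]))^n = ((p^n : ℕ) : ℚ_[p]) := by push_cast; ring
    rw [h', ← h2M]; push_cast; ring
  have e : ((-(3*((2*M:ℕ):ℚ))/2 - 1 + i : ℚ) : ℚ_[p]) / ((i:ℚ_[p]) + 1/2) - 1
      = (-3 * (p:ℚ_[p])^n) / 2 / ((i:ℚ_[p]) + 1/2) := by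
    rw [show ((-(3*((2*M:ℕ):ℚ))/2 - 1 + i : ℚ) : ℚ_[p]) = -3*(M:ℚ_[p]) - 1 + i from by
      push_cast; ring, div_sub_one hden]
    congr 1
    rw [hpn]
    ring
  rw [e]
  calc ‖-3 * (p:ℚ_[p])^n / 2 / ((i:ℚ_[p]) + 1/2)‖
      ≤ ‖-3 * (p:ℚ_[p])^n / 2‖ * (2*(i:ℝ)+1) := aux_norm_div_den hodd _ i
  _ ≤ (p:ℝ)^(-n:ℤ) * (2*(i:ℝ)+1) := by
      rw [norm_div, aux_norm_two hodd, div_one, norm_mul, norm_neg, Padic.norm_p_pow]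
      have h3 : ‖(3:ℚ_[p])‖ ≤ 1 := by
        have := aux_norm_nat_le_one (p := p) 3
        simpa using this
      have hpos : (0:ℝ) < (p:ℝ)^(-n:ℤ) := by
        apply zpow_pos
        exact_mod_cast (Fact.out : p.Prime).pos
      have hi : (0:ℝ) ≤ 2*(i:ℝ)+1 := by positivity
      calc ‖(3:ℚ_[p])‖ * (p:ℝ)^(-n:ℤ) * (2*(i:ℝ)+1) ≤ 1 * (p:ℝ)^(-n:ℤ) * (2*(i:ℝ)+1) := by
            apply mul_le_mul_of_nonneg_right _ hi
            exact mul_le_mul_of_nonneg_right h3 hpos.le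
      _ = (p:ℝ)^(-n:ℤ) * (2*(i:ℝ)+1) := by ring

lemma aux_r3 (hodd : p ≠ 2) {n M : ℕ} (h2M : 2*M+1 = p^n) {i : ℕ} (hi : i < M) :
    ‖(((i:ℚ) + 1 : ℚ) : ℚ_[p]) / (((i:ℚ) - 2*M : ℚ) : ℚ_[p]) - 1‖
      ≤ (p:ℝ)^(-n:ℤ) * (2*(i:ℝ)+1) := by
  have hi1 : i + 1 < p ^ n := by omega
  have hnorm := aux_norm_sub_ppow (p := p) (i+1) n (by omega) hi1
  have hden0 : ((i+1:ℕ) : ℚ_[p]) - (p:ℚ_[p])^n ≠ 0 := by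
    intro h
    have : ‖((i+1:ℕ) : ℚ_[p])‖ = 0 := by rw [← hnorm, h, norm_zero]
    rw [norm_eq_zero] at this
    exact (Nat.cast_ne_zero.mpr (by omega : i+1 ≠ 0)) this
  have eden : (((i:ℚ) - 2*M : ℚ) : ℚ_[p]) = ((i+1:ℕ) : ℚ_[p]) - (p:ℚ_[p])^n := by
    have hpn : ((p:ℚ_[p]))^n = 2*(M:ℚ_[p])+1 := by
      have h' : ((p:ℚ_[p]))^n = ((p^n : ℕ) : ℚ_[p]) := by push_cast; ring
      rw [h', ← h2M]; push_cast; ring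
    rw [hpn]; push_cast; ring
  have e : (((i:ℚ) + 1 : ℚ) : ℚ_[p]) / (((i:ℚ) - 2*M : ℚ) : ℚ_[p]) - 1
      = (p:ℚ_[p])^n / (((i+1:ℕ) : ℚ_[p]) - (p:ℚ_[p])^n) := by
    rw [eden, div_sub_one hden0]
    congr 1
    push_cast
    ring
  rw [e]
  have hh : ‖(p:ℚ_[p])^n / (((i+1:ℕ) : ℚ_[p]) - (p:ℚ_[p])^n)‖
      = ‖(p:ℚ_[p])^n / ((i+1:ℕ) : ℚ_[p])‖ := by
    rw [norm_div, norm_div, hnorm]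
  rw [hh]
  calc ‖(p:ℚ_[p])^n / ((i+1:ℕ) : ℚ_[p])‖ ≤ ‖(p:ℚ_[p])^n‖ * ((i+1:ℕ):ℝ) :=
        aux_div_nat _ _ (by omega)
  _ ≤ (p:ℝ)^(-n:ℤ) * (2*(i:ℝ)+1) := by
      rw [Padic.norm_p_pow]
      apply mul_le_mul_of_nonneg_left _ (by positivity)
      push_cast
      linarith [Nat.cast_nonneg (α := ℝ) i]

lemma two_mul_le_three_pow (k : ℕ) : 2*k ≤ 3^k := by
  induction k with
  | zero => norm_num
  | succ k ih =>
    have : (3:ℕ)^k ≥ 1 := Nat.one_le_pow _ _ (by norm_num)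
    calc 2*(k+1) = 2*k + 2 := by ring
    _ ≤ 3^k + 2*3^k := by omega
    _ = 3^(k+1) := by ring

lemma two_mul_add_one_le_three_pow (n : ℕ) : 2*n+1 ≤ 3^n := by
  induction n with
  | zero => norm_num
  | succ n ih =>
    have : (3:ℕ)^n ≥ 1 := Nat.one_le_pow _ _ (by norm_num)
    calc 2*(n+1)+1 = (2*n+1) + 2 := by ring
    _ ≤ 3^n + 2*3^n := by omega
    _ = 3^(n+1) := by ring

lemma aux_eps_le_one {n M k : ℕ} (h2M : 2*M+1 = p^n) (hk : k ≤ M) :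
    (p:ℝ)^(-n:ℤ) * (2*(k:ℝ)) ≤ 1 := by
  have hppow : (0:ℝ) < (p:ℝ)^(n:ℕ) := by
    have : (0:ℝ) < (p:ℝ) := by exact_mod_cast (Fact.out : p.Prime).pos
    positivity
  have h2k : (2*(k:ℝ)) ≤ (p:ℝ)^(n:ℕ) := by
    have h' : (2*k) ≤ p^n := by omega
    calc (2*(k:ℝ)) = ((2*k : ℕ):ℝ) := by push_cast; ring
    _ ≤ ((p^n : ℕ):ℝ) := by exact_mod_cast h'
    _ = (p:ℝ)^n := by push_cast; ring
  rw [zpow_neg, zpow_natCast]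
  calc ((p:ℝ)^(n:ℕ))⁻¹ * (2*(k:ℝ)) ≤ ((p:ℝ)^(n:ℕ))⁻¹ * (p:ℝ)^(n:ℕ) :=
        mul_le_mul_of_nonneg_left h2k (inv_nonneg.mpr hppow.le)
  _ = 1 := inv_mul_cancel₀ hppow.ne'

lemma aux_final {B Pr : ℚ_[p]} {ε : ℝ} (hB : ‖B‖ ≤ 1) (hPr : ‖Pr - 1‖ ≤ ε) :
    ‖B^2 * Pr - B^2‖ ≤ ε := by
  rw [show B^2*Pr - B^2 = B^2*(Pr-1) from by ring, norm_mul, norm_pow]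
  calc ‖B‖^2 * ‖Pr-1‖ ≤ 1^2 * ε :=
    mul_le_mul (pow_le_pow_left₀ (norm_nonneg _) hB 2) hPr (norm_nonneg _) (by norm_num)
  _ = ε := by ring

lemma key_coef (hodd : p ≠ 2) {n M k : ℕ} (h2M : 2*M+1 = p^n) (hk : k ≤ M) (s : ℚ)
    (hs : ∀ i, i < k → ‖((s + (i:ℚ) : ℚ) : ℚ_[p]) / ((i:ℚ_[p]) + 1/2) - 1‖
      ≤ (p:ℝ)^(-n:ℤ) * (2*(i:ℝ)+1)) :
    ‖((poch (-((2*M:ℕ):ℚ)/2) k * poch s k / (poch (-((2*M:ℕ):ℚ)) k * k.factorial) : ℚ) : ℚ_[p])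
      - ((bq k : ℚ) : ℚ_[p])^2‖ ≤ (p:ℝ)^(-n:ℤ) * (2*(k:ℝ)) := by
  have hppos : (0:ℝ) < (p:ℝ)^(-n:ℤ) :=
    zpow_pos (by exact_mod_cast (Fact.out : p.Prime).pos) _
  set ε : ℝ := (p:ℝ)^(-n:ℤ) * (2*(k:ℝ)) with hεdef
  have hε0 : 0 ≤ ε := by positivity
  have hε1 : ε ≤ 1 := aux_eps_le_one h2M hk
  have hfac : ∀ i, i < k →
      ‖(((((i:ℚ) - M) / ((i:ℚ) + 1/2)) * ((s + i) / ((i:ℚ) + 1/2)) *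
          (((i:ℚ) + 1) / ((i:ℚ) - 2*M)) : ℚ) : ℚ_[p]) - 1‖ ≤ ε := by
    intro i hi
    have hmono : (p:ℝ)^(-n:ℤ) * (2*(i:ℝ)+1) ≤ ε := by
      rw [hεdef]
      apply mul_le_mul_of_nonneg_left _ hppos.le
      have : (i:ℝ) + 1 ≤ (k:ℝ) := by exact_mod_cast Nat.succ_le_of_lt hi
      linarith
    rw [Rat.cast_mul, Rat.cast_mul, Rat.cast_div, Rat.cast_div, Rat.cast_div]
    have hden : (((i:ℚ) + 1/2 : ℚ) : ℚ_[p]) = (i:ℚ_[p]) + 1/2 := by push_cast; ring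
    rw [hden]
    exact aux_three hε1 ((aux_r1 hodd h2M i).trans hmono) ((hs i hi).trans hmono)
      ((aux_r3 hodd h2M (lt_of_lt_of_le hi hk)).trans hmono)
  rw [coef_eq M k hk s, Rat.cast_mul, Rat.cast_pow, Rat.cast_prod]
  exact aux_final (aux_norm_bq_le_one hodd k) (aux_prod_sub_one hε0 hε1 hfac)

lemma Pcoef_bound (hodd : p ≠ 2) {n M k : ℕ} (h2M : 2*M+1 = p^n) (hk : k ≤ M) :
    ‖((Pcoef (2*M) k : ℚ) : ℚ_[p]) - ((bq k : ℚ) : ℚ_[p])^2‖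
      ≤ (p:ℝ)^(-n:ℤ) * (2*(k:ℝ)) := by
  rw [Pcoef]
  exact key_coef hodd h2M hk (((2*M:ℕ):ℚ)/2 + 1) (fun i _ => aux_r2P hodd h2M i)

lemma Qcoef_bound (hodd : p ≠ 2) {n M k : ℕ} (h2M : 2*M+1 = p^n) (hk : k ≤ M) :
    ‖((Qcoef (2*M) k : ℚ) : ℚ_[p]) - ((bq k : ℚ) : ℚ_[p])^2‖
      ≤ (p:ℝ)^(-n:ℤ) * (2*(k:ℝ)) := by
  rw [Qcoef]
  exact key_coef hodd h2M hk (-(3*((2*M:ℕ):ℚ))/2 - 1) (fun i _ => aux_r2Q hodd h2M i)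

lemma aux_norm_le_one_of_close {x y : ℚ_[p]} (h : ‖x - y‖ ≤ 1) (hy : ‖y‖ ≤ 1) : ‖x‖ ≤ 1 := by
  calc ‖x‖ = ‖(x - y) + y‖ := by ring_nf
  _ ≤ max ‖x - y‖ ‖y‖ := Padic.nonarchimedean _ _
  _ ≤ 1 := max_le h hy

theorem stmt19 (p : ℕ) [Fact p.Prime] (hodd : p ≠ 2) (z : ℚ_[p]) (hz : ‖z‖ < 1) :
    Summable (fun k : ℕ => (((2 * k).choose k : ℚ_[p]) / 4 ^ k) ^ 2 * z ^ k) ∧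
    (∀ n : ℕ, 1 ≤ n →
      ‖Polynomial.aeval z (Ppoly (p ^ n - 1) * Qpoly (p ^ n - 1)) - (Fpadic p z) ^ 2‖ ≤
        (p : ℝ) ^ (-(n : ℤ))) ∧
    Filter.Tendsto (fun n : ℕ => Polynomial.aeval z (Ppoly (p ^ n - 1) * Qpoly (p ^ n - 1)))
      Filter.atTop (nhds ((Fpadic p z) ^ 2)) := by
  have hp : p.Prime := Fact.out
  have hp3 : 3 ≤ p := by
    have := hp.two_le
    omega
  have hppos : (0:ℝ) < (p:ℝ) := by exact_mod_cast hp.pos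
  have hp1 : (1:ℝ) < (p:ℝ) := by exact_mod_cast hp.one_lt
  -- the common coefficient function
  set f : ℕ → ℚ_[p] := fun k => ((bq k : ℚ) : ℚ_[p])^2 * z^k with hf
  have hb : (fun k : ℕ => (((2 * k).choose k : ℚ_[p]) / 4 ^ k) ^ 2 * z ^ k) = f := by
    funext k
    rw [hf]
    congr 1
    rw [bq]
    push_cast
    ring
  have hfle : ∀ k : ℕ, ‖f k‖ ≤ ‖z‖^k := by
    intro k
    rw [hf, norm_mul, norm_pow, norm_pow]
    calc ‖((bq k : ℚ) : ℚ_[p])‖^2 * ‖z‖^k ≤ 1^2 * ‖z‖^k := by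
          apply mul_le_mul_of_nonneg_right _ (by positivity)
          exact pow_le_pow_left₀ (norm_nonneg _) (aux_norm_bq_le_one hodd k) 2
    _ = ‖z‖^k := by ring
  have hsum : Summable f :=
    Summable.of_norm_bounded (summable_geometric_of_lt_one (norm_nonneg z) hz) hfle
  have hF : Fpadic p z = ∑' k, f k := by rw [Fpadic, hb]
  have hz1 : ‖z‖ ≤ (p:ℝ)^(-1:ℤ) := by
    have := (Padic.norm_lt_pow_iff_norm_le_pow_sub_one z 0).mp (by simpa using hz)
    simpa using this
  -- the main estimate
  have hmain : ∀ n : ℕ, 1 ≤ n →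
      ‖Polynomial.aeval z (Ppoly (p ^ n - 1) * Qpoly (p ^ n - 1)) - (Fpadic p z) ^ 2‖ ≤
        (p : ℝ) ^ (-(n : ℤ)) := by
    intro n hn
    have hppn : (0:ℝ) < (p:ℝ)^(-(n:ℤ)) := zpow_pos hppos _
    obtain ⟨M, h2M⟩ : ∃ M, 2*M+1 = p^n := by
      obtain ⟨r, hr⟩ := (hp.odd_of_ne_two hodd).pow (n := n)
      exact ⟨r, by omega⟩
    have hN : p^n - 1 = 2*M := by omega
    have h3n : 3^n ≤ p^n := Nat.pow_le_pow_left hp3 n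
    have hnM : n ≤ M := by
      have := two_mul_add_one_le_three_pow n
      omega
    have hdiv : (2*M)/2 = M := by omega
    rw [hN]
    -- the evaluation of the polynomials
    have haev : ∀ c : ℕ → ℚ, Polynomial.aeval z (∑ k ∈ Finset.range (M+1), C (c k) * X ^ k)
        = ∑ k ∈ Finset.range (M+1), ((c k : ℚ) : ℚ_[p]) * z^k := by
      intro c
      rw [map_sum]
      refine Finset.sum_congr rfl fun k _ => ?_
      rw [map_mul, map_pow, aeval_X, aeval_C, eq_ratCast]
    have haevP : Polynomial.aeval z (Ppoly (2*M))
        = ∑ k ∈ Finset.range (M+1), ((Pcoef (2*M) k : ℚ) : ℚ_[p]) * z^k := by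
      rw [Ppoly, hdiv, haev]
    have haevQ : Polynomial.aeval z (Qpoly (2*M))
        = ∑ k ∈ Finset.range (M+1), ((Qcoef (2*M) k : ℚ) : ℚ_[p]) * z^k := by
      rw [Qpoly, hdiv, haev]
    set S : ℚ_[p] := ∑ k ∈ Finset.range (M+1), f k with hS
    -- per-term estimate infrastructure
    have hzpow : ∀ k : ℕ, ‖z‖^k ≤ ((p:ℝ)^(-1:ℤ))^k :=
      fun k => pow_le_pow_left₀ (norm_nonneg z) hz1 k
    have h2kpow : ∀ k : ℕ, (2*(k:ℝ)) * ((p:ℝ)^(-1:ℤ))^k ≤ 1 := by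
      intro k
      have hpk : (0:ℝ) < (p:ℝ)^k := by positivity
      have h1 : (2*(k:ℝ)) ≤ (p:ℝ)^k := by
        calc (2*(k:ℝ)) = ((2*k:ℕ):ℝ) := by push_cast; ring
        _ ≤ ((3^k:ℕ):ℝ) := by exact_mod_cast two_mul_le_three_pow k
        _ ≤ ((p^k:ℕ):ℝ) := by exact_mod_cast Nat.pow_le_pow_left hp3 k
        _ = (p:ℝ)^k := by push_cast; ring
      rw [zpow_neg, zpow_one, inv_pow, ← div_eq_mul_inv]
      exact (div_le_one hpk).mpr h1
    have hterm : ∀ (g : ℕ → ℚ)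
        (hg : ∀ k, k ≤ M → ‖((g k : ℚ) : ℚ_[p]) - ((bq k : ℚ) : ℚ_[p])^2‖
          ≤ (p:ℝ)^(-n:ℤ) * (2*(k:ℝ))),
        ∀ k, k ≤ M → ‖((g k : ℚ) : ℚ_[p]) * z^k - f k‖ ≤ (p:ℝ)^(-(n:ℤ)) := by
      intro g hg k hk
      have e : ((g k : ℚ) : ℚ_[p]) * z^k - f k
          = (((g k : ℚ) : ℚ_[p]) - ((bq k : ℚ) : ℚ_[p])^2) * z^k := by
        rw [hf]; ring
      rw [e, norm_mul, norm_pow]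
      calc ‖((g k : ℚ) : ℚ_[p]) - ((bq k : ℚ) : ℚ_[p])^2‖ * ‖z‖^k
          ≤ ((p:ℝ)^(-n:ℤ) * (2*(k:ℝ))) * ((p:ℝ)^(-1:ℤ))^k := by
            apply mul_le_mul (hg k hk) (hzpow k) (by positivity) (by positivity)
      _ = (p:ℝ)^(-(n:ℤ)) * ((2*(k:ℝ)) * ((p:ℝ)^(-1:ℤ))^k) := by ring
      _ ≤ (p:ℝ)^(-(n:ℤ)) * 1 := mul_le_mul_of_nonneg_left (h2kpow k) hppn.le
      _ = (p:ℝ)^(-(n:ℤ)) := mul_one _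
    -- distance from the polynomial values to the partial sum S
    have hPS : ‖Polynomial.aeval z (Ppoly (2*M)) - S‖ ≤ (p:ℝ)^(-(n:ℤ)) := by
      rw [haevP, hS, ← Finset.sum_sub_distrib]
      refine IsUltrametricDist.norm_sum_le_of_forall_le_of_nonneg hppn.le fun k hk => ?_
      exact hterm _ (fun k hk => Pcoef_bound hodd h2M hk) k
        (by rw [Finset.mem_range] at hk; omega)
    have hQS : ‖Polynomial.aeval z (Qpoly (2*M)) - S‖ ≤ (p:ℝ)^(-(n:ℤ)) := by
      rw [haevQ, hS, ← Finset.sum_sub_distrib]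
      refine IsUltrametricDist.norm_sum_le_of_forall_le_of_nonneg hppn.le fun k hk => ?_
      exact hterm _ (fun k hk => Qcoef_bound hodd h2M hk) k
        (by rw [Finset.mem_range] at hk; omega)
    -- distance from F to the partial sum S
    have hFS : ‖Fpadic p z - S‖ ≤ (p:ℝ)^(-(n:ℤ)) := by
      have hsplit := Summable.sum_add_tsum_nat_add (f := f) (M+1) hsum
      have e : Fpadic p z - S = ∑' i, f (i + (M+1)) := by
        rw [hF, hS, ← hsplit]
        ring
      rw [e]
      refine IsUltrametricDist.norm_tsum_le_of_forall_le_of_nonneg hppn.le fun i => ?_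
      calc ‖f (i + (M+1))‖ ≤ ‖z‖^(i + (M+1)) := hfle _
      _ ≤ ((p:ℝ)^(-1:ℤ))^(i + (M+1)) := hzpow _
      _ = (p:ℝ)^(-(i + (M+1)) : ℤ) := by
          rw [← zpow_natCast ((p:ℝ)^(-1:ℤ)), ← zpow_mul]
          congr 1
          push_cast
          ring
      _ ≤ (p:ℝ)^(-(n:ℤ)) := by
          apply zpow_le_zpow_right₀ hp1.le
          omega
    -- norms of the polynomial values are at most 1
    have hone : (p:ℝ)^(-(n:ℤ)) ≤ 1 := by
      calc (p:ℝ)^(-(n:ℤ)) ≤ (p:ℝ)^(0:ℤ) := zpow_le_zpow_right₀ hp1.le (by omega)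
      _ = 1 := zpow_zero _
    have hcoefle : ∀ (g : ℕ → ℚ)
        (hg : ∀ k, k ≤ M → ‖((g k : ℚ) : ℚ_[p]) - ((bq k : ℚ) : ℚ_[p])^2‖
          ≤ (p:ℝ)^(-n:ℤ) * (2*(k:ℝ))),
        ‖∑ k ∈ Finset.range (M+1), ((g k : ℚ) : ℚ_[p]) * z^k‖ ≤ 1 := by
      intro g hg
      refine IsUltrametricDist.norm_sum_le_of_forall_le_of_nonneg zero_le_one fun k hk => ?_
      rw [Finset.mem_range] at hk
      have hkM : k ≤ M := by omega
      rw [norm_mul, norm_pow]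
      have hgk : ‖((g k : ℚ) : ℚ_[p])‖ ≤ 1 := by
        refine aux_norm_le_one_of_close ((hg k hkM).trans (aux_eps_le_one h2M hkM)) ?_
        calc ‖((bq k : ℚ) : ℚ_[p])^2‖ = ‖((bq k : ℚ) : ℚ_[p])‖^2 := norm_pow _ _
        _ ≤ 1^2 := pow_le_pow_left₀ (norm_nonneg _) (aux_norm_bq_le_one hodd k) 2
        _ = 1 := one_pow 2
      calc ‖((g k : ℚ) : ℚ_[p])‖ * ‖z‖^k ≤ 1 * 1^k := by
            apply mul_le_mul hgk (pow_le_pow_left₀ (norm_nonneg z) hz.le k)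
              (by positivity) zero_le_one
      _ = 1 := by ring
    have hPle : ‖Polynomial.aeval z (Ppoly (2*M))‖ ≤ 1 := by
      rw [haevP]
      exact hcoefle _ (fun k hk => Pcoef_bound hodd h2M hk)
    have hQle : ‖Polynomial.aeval z (Qpoly (2*M))‖ ≤ 1 := by
      rw [haevQ]
      exact hcoefle _ (fun k hk => Qcoef_bound hodd h2M hk)
    -- combine
    set Pz := Polynomial.aeval z (Ppoly (2*M)) with hPz
    set Qz := Polynomial.aeval z (Qpoly (2*M)) with hQz
    set F := Fpadic p z with hFdef
    have hPF : ‖Pz - F‖ ≤ (p:ℝ)^(-(n:ℤ)) := by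
      have e : Pz - F = (Pz - S) + (S - F) := by ring
      rw [e]
      refine le_trans (Padic.nonarchimedean _ _) (max_le hPS ?_)
      rw [norm_sub_rev]
      exact hFS
    have hQF : ‖Qz - F‖ ≤ (p:ℝ)^(-(n:ℤ)) := by
      have e : Qz - F = (Qz - S) + (S - F) := by ring
      rw [e]
      refine le_trans (Padic.nonarchimedean _ _) (max_le hQS ?_)
      rw [norm_sub_rev]
      exact hFS
    have hmul : Polynomial.aeval z (Ppoly (2*M) * Qpoly (2*M)) = Pz * Qz := by
      rw [map_mul]
    rw [hmul]
    have e : Pz * Qz - F^2 = (Pz * (Qz - F) + (Pz - F) * Qz) + (-((Pz - F) * (Qz - F))) := by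
      ring
    rw [e]
    refine le_trans (Padic.nonarchimedean _ _) (max_le ?_ ?_)
    · refine le_trans (Padic.nonarchimedean _ _) (max_le ?_ ?_)
      · rw [norm_mul]
        calc ‖Pz‖ * ‖Qz - F‖ ≤ 1 * (p:ℝ)^(-(n:ℤ)) :=
          mul_le_mul hPle hQF (norm_nonneg _) zero_le_one
        _ = (p:ℝ)^(-(n:ℤ)) := one_mul _
      · rw [norm_mul]
        calc ‖Pz - F‖ * ‖Qz‖ ≤ (p:ℝ)^(-(n:ℤ)) * 1 :=
          mul_le_mul hPF hQle (norm_nonneg _) hppn.le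
        _ = (p:ℝ)^(-(n:ℤ)) := mul_one _
    · rw [norm_neg, norm_mul]
      calc ‖Pz - F‖ * ‖Qz - F‖ ≤ (p:ℝ)^(-(n:ℤ)) * 1 :=
        mul_le_mul hPF (hQF.trans hone) (norm_nonneg _) hppn.le
      _ = (p:ℝ)^(-(n:ℤ)) := mul_one _
  refine ⟨by rw [hb]; exact hsum, hmain, ?_⟩
  -- the limit statement
  have htend0 : Filter.Tendsto
      (fun n : ℕ => Polynomial.aeval z (Ppoly (p ^ n - 1) * Qpoly (p ^ n - 1)) - (Fpadic p z)^2)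
      Filter.atTop (nhds 0) := by
    apply squeeze_zero_norm' (a := fun n : ℕ => (p:ℝ)^(-(n:ℤ)))
    · filter_upwards [Filter.eventually_ge_atTop 1] with n hn
      exact hmain n hn
    · have e : (fun n : ℕ => (p:ℝ)^(-(n:ℤ))) = fun n : ℕ => ((p:ℝ)⁻¹)^n := by
        funext n
        rw [zpow_neg, zpow_natCast, inv_pow]
      rw [e]
      exact tendsto_pow_atTop_nhds_zero_of_lt_one (by positivity)
        (inv_lt_one_of_one_lt₀ hp1)
  exact tendsto_sub_nhds_zero_iff.mp htend0
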